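/- Let $G$ be a locally finite connected graph, and suppose that for every $x \in V(G)$ a set $U_x \subseteq B_G(x, r') \setminus B_G(x, r)$ is given such that removing $U_x$ separates $x$ from $V(G) \setminus B_G(x, r')$. Let $\{\beta_x\}_{x \in V(G)}$ be distinct real labels, define $\hat{U}_x = U_x \setminus \bigcup_{y : \beta_y < \beta_x} B_G(y, r)$ and $W = \bigcup_x \hat{U}_x$. Then every connected component of the induced subgraph $G[V(G) \setminus W]$ has diameter at most $2r'$ in $\mathrm{dist}_G$. -/

import Mathlib

private lemma ball_fin {V : Type*} (G : SimpleGraph V) (hconn : G.Connected)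
    (hlf : ∀ v : V, (G.neighborSet v).Finite) (x : V) :
    ∀ n : ℕ, {z | G.dist x z ≤ n}.Finite := by
  intro n
  induction n with
  | zero =>
    apply Set.Finite.subset (Set.finite_singleton x)
    intro z hz
    simp only [Set.mem_setOf_eq, Nat.le_zero] at hz
    have h := SimpleGraph.dist_eq_zero_iff_eq_or_not_reachable.mp hz
    rcases h with h | h
    · simp [h]
    · exact absurd (hconn.preconnected x z) h
  | succ n ih =>
    apply Set.Finite.subset (ih.union (Set.Finite.biUnion ih (fun w _ => hlf w)))
    intro z hz
    simp only [Set.mem_setOf_eq] at hz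
    obtain ⟨p, hp⟩ := (hconn.preconnected x z).exists_walk_length_eq_dist
    cases hr : p.reverse with
    | nil =>
      left
      simp [SimpleGraph.dist_self]
    | cons h q =>
      rename_i w
      have hl : p.length = q.length + 1 := by
        have := congrArg SimpleGraph.Walk.length hr
        simpa [SimpleGraph.Walk.length_reverse] using this
      right
      have hw : G.dist x w ≤ q.length := by
        rw [SimpleGraph.dist_comm]
        exact SimpleGraph.dist_le q
      exact Set.mem_biUnion (show G.dist x w ≤ n by omega) h.symm

/-- Shattering by randomized separators. Suppose that for each
vertex `x` of a locally finite connected graph `G` a set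
`U x ⊆ B_G(x,r') \ B_G(x,r)` is given that separates `x` from `V ∖ B_G(x,r')`,
and let `β` be distinct real labels. With
`Û x = U x \ ⋃_{y : β y < β x} B_G(y,r)` and `W = ⋃_x Û x`, every connected
component of the induced subgraph `G[V ∖ W]` has diameter at most `2r'` in
`dist_G`. -/
theorem separator_shattering {V : Type*} (G : SimpleGraph V) (hconn : G.Connected)
    (hlf : ∀ v : V, (G.neighborSet v).Finite) (r r' : ℕ)
    (U : V → Set V)
    (hUsub : ∀ x, U x ⊆ {y | G.dist x y ≤ r'} \ {y | G.dist x y ≤ r})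
    (hsep : ∀ x y : V, r' < G.dist x y → ∀ p : G.Walk x y, ∃ z ∈ U x, z ∈ p.support)
    (β : V → ℝ) (hβ : Function.Injective β)
    (W : Set V)
    (hW : W = ⋃ x : V, (U x \ {z | ∃ y, β y < β x ∧ G.dist y z ≤ r})) :
    ∀ x y : ↥(Wᶜ), (G.induce (Wᶜ : Set V)).Reachable x y →
      G.dist x.val y.val ≤ 2 * r' := by
  classical
  intro x y hreach
  by_contra hfar
  push_neg at hfar
  obtain ⟨p⟩ := hreach
  set q : G.Walk x.val y.val := p.map (SimpleGraph.Embedding.induce (Wᶜ : Set V)).toHom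
    with hq
  have hqW : ∀ v ∈ q.support, v ∉ W := by
    intro v hv
    have hv : v ∈ (p.map (SimpleGraph.Embedding.induce (Wᶜ : Set V)).toHom).support := hv
    rw [SimpleGraph.Walk.support_map, List.mem_map] at hv
    obtain ⟨u, hu, rfl⟩ := hv
    exact u.2
  -- the set of vertices within distance r of the walk
  set S : Set V := {z | ∃ w ∈ q.support, G.dist z w ≤ r} with hS
  have hSfin : S.Finite := by
    have : S ⊆ ⋃ w ∈ {w | w ∈ q.support}, {z | G.dist w z ≤ r} := by
      intro z hz
      obtain ⟨w, hw, hd⟩ := hz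
      exact Set.mem_biUnion hw (by rwa [Set.mem_setOf_eq, SimpleGraph.dist_comm])
    exact Set.Finite.subset
      (Set.Finite.biUnion (List.finite_toSet _) (fun w _ => ball_fin G hconn hlf w r)) this
  have hxS : x.val ∈ S := ⟨x.val, q.start_mem_support, by simp [SimpleGraph.dist_self]⟩
  obtain ⟨z, hzS, hzmin⟩ := Set.exists_min_image S β hSfin ⟨x.val, hxS⟩
  obtain ⟨w0, hw0, hzw0⟩ := hzS
  -- key claim
  have key : ∀ a : V, r' < G.dist z a → ∀ qa : G.Walk w0 a,
      (∀ v ∈ qa.support, v ∈ q.support) → False := by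
    intro a ha qa hqa
    obtain ⟨ω, hω⟩ := (hconn.preconnected z w0).exists_walk_length_eq_dist
    obtain ⟨z', hz'U, hz'sup⟩ := hsep z a ha (ω.append qa)
    have hz'r' : G.dist z z' ≤ r' := (hUsub z hz'U).1
    have hz'r : ¬ G.dist z z' ≤ r := (hUsub z hz'U).2
    rw [SimpleGraph.Walk.mem_support_append_iff] at hz'sup
    rcases hz'sup with hz' | hz'
    · -- z' on the short walk from z to w0 : contradiction with dist > r
      apply hz'r
      calc G.dist z z' ≤ (ω.takeUntil z' hz').length := SimpleGraph.dist_le _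
        _ ≤ ω.length := SimpleGraph.Walk.length_takeUntil_le ω hz'
        _ = G.dist z w0 := hω
        _ ≤ r := hzw0
    · -- z' on the main walk : z' ∈ W, contradiction
      have hz'q : z' ∈ q.support := hqa z' hz'
      apply hqW z' hz'q
      rw [hW]
      refine Set.mem_iUnion.mpr ⟨z, hz'U, ?_⟩
      rintro ⟨y', hy1, hy2⟩
      have : y' ∈ S := ⟨z', hz'q, hy2⟩
      exact absurd hy1 (not_lt.mpr (hzmin y' this))
  have htri : G.dist x.val y.val ≤ G.dist x.val z + G.dist z y.val := hconn.dist_triangle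
  have hx' : G.dist z x.val = G.dist x.val z := SimpleGraph.dist_comm
  rcases lt_or_ge r' (G.dist z x.val) with h1 | h1
  · exact key x.val h1 (q.takeUntil w0 hw0).reverse (by
      intro v hv
      rw [SimpleGraph.Walk.support_reverse, List.mem_reverse] at hv
      exact SimpleGraph.Walk.support_takeUntil_subset q hw0 hv)
  · have h2 : r' < G.dist z y.val := by omega
    exact key y.val h2 (q.dropUntil w0 hw0) (fun v hv =>
      SimpleGraph.Walk.support_dropUntil_subset q hw0 hv)
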